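/- Let A be a Noetherian commutative ring, I and J ideals of A, and a, b positive integers. Then the Ratliff-Rush closure of I^a J^b equals the union over all k ≥ 0 of the colon ideals (I^{a+k} J^{b+k} : I^k J^k). -/

import Mathlib

/-- The Ratliff-Rush closure of an ideal `K` in a Noetherian ring:
the union over `n ≥ 0` of `(K^(n+1) : K^n)`. -/
def ratliffRushClosure {A : Type*} [CommRing A] (K : Ideal A) : Set A :=
  ⋃ n : ℕ, ((K ^ (n + 1)).colon (K ^ n : Ideal A) : Set A)

/-- For ideals `I, J` of a Noetherian ring `A` and positive integers
`a, b`, the Ratliff-Rush closure of `I^a J^b` equals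
`⋃_{k ≥ 0} (I^(a+k) J^(b+k) : I^k J^k)`. -/
theorem ratliffRush_pow_mul_eq_union_colon {A : Type*} [CommRing A] [IsNoetherianRing A]
    (I J : Ideal A) (a b : ℕ) (ha : 0 < a) (hb : 0 < b) :
    ratliffRushClosure (I ^ a * J ^ b) =
      ⋃ k : ℕ, (((I ^ (a + k) * J ^ (b + k))).colon (I ^ k * J ^ k) : Set A) := by
  obtain ⟨a, rfl⟩ := Nat.exists_eq_succ_of_ne_zero ha.ne'
  obtain ⟨b, rfl⟩ := Nat.exists_eq_succ_of_ne_zero hb.ne'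
  have hcolon : ∀ (N P : Ideal A) (x : A),
      x ∈ N.colon P ↔ Ideal.span {x} * P ≤ N := by
    intro N P x
    rw [Ideal.span_singleton_mul_le_iff, Submodule.mem_colon]
    simp [smul_eq_mul]
  ext x
  simp only [ratliffRushClosure, Set.mem_iUnion, SetLike.mem_coe, hcolon]
  constructor
  · rintro ⟨n, hn⟩
    refine ⟨n * (a + 1 + (b + 1)), ?_⟩
    calc Ideal.span {x} * (I ^ (n * (a + 1 + (b + 1))) * J ^ (n * (a + 1 + (b + 1))))
        = Ideal.span {x} * (I ^ (a + 1) * J ^ (b + 1)) ^ n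
            * (I ^ ((b + 1) * n) * J ^ ((a + 1) * n)) := by ring_nf
      _ ≤ (I ^ (a + 1) * J ^ (b + 1)) ^ (n + 1)
            * (I ^ ((b + 1) * n) * J ^ ((a + 1) * n)) := Ideal.mul_mono_left hn
      _ = I ^ (a + 1 + n * (a + 1 + (b + 1))) * J ^ (b + 1 + n * (a + 1 + (b + 1))) := by
          ring_nf
  · rintro ⟨k, hk⟩
    refine ⟨k, ?_⟩
    calc Ideal.span {x} * (I ^ (a + 1) * J ^ (b + 1)) ^ k
        = Ideal.span {x} * (I ^ k * J ^ k) * (I ^ (a * k) * J ^ (b * k)) := by ring_nf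
      _ ≤ I ^ (a + 1 + k) * J ^ (b + 1 + k) * (I ^ (a * k) * J ^ (b * k)) :=
          Ideal.mul_mono_left hk
      _ = (I ^ (a + 1) * J ^ (b + 1)) ^ (k + 1) := by ring_nf
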